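/- Let m, n be natural numbers. The function (Γ, Ω) ↦ Re Tr(Ω⁻¹ Γ Γᴴ) is convex (with respect to the real vector-space structure on pairs of complex matrices) on the convex set { (Γ, Ω) : Γ an m×n complex matrix, Ω an m×m positive definite complex matrix }. -/

import Mathlib

open Matrix ComplexOrder

lemma psd_trace_re_nonneg {m : ℕ} {A : Matrix (Fin m) (Fin m) ℂ} (hA : A.PosSemidef) :
    0 ≤ A.trace.re := by
  rw [Matrix.trace, Complex.re_sum]
  refine Finset.sum_nonneg fun i _ => ?_
  have := hA.re_dotProduct_nonneg (Pi.single i 1)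
  simpa [Matrix.diag, dotProduct, Pi.single_apply, mulVec, Finset.sum_ite_eq,
    Finset.sum_ite_eq'] using this

lemma posDef_real_smul {m : ℕ} {A : Matrix (Fin m) (Fin m) ℂ} (hA : A.PosDef)
    {a : ℝ} (ha : 0 < a) : (a • A).PosDef := by
  have hcoe : a • A = (a:ℂ) • A := by ext i j; simp [Matrix.smul_apply, Complex.real_smul]
  rw [hcoe]
  constructor
  · have h := hA.isHermitian
    unfold Matrix.IsHermitian at h ⊢
    rw [conjTranspose_smul, h]
    congr 1
    simp
  · intro x hx
    have h1 : (0:ℂ) < (a:ℂ) := by rw [Complex.zero_lt_real]; exact ha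
    exact (hA.smul h1).2 hx

lemma tangent {m n : ℕ} {Ω : Matrix (Fin m) (Fin m) ℂ} (hΩ : Ω.PosDef)
    (Γ : Matrix (Fin m) (Fin n) ℂ) (X : Matrix (Fin m) (Fin n) ℂ) :
    2 * ((Xᴴ * Γ).trace).re - ((Xᴴ * Ω * X).trace).re ≤ ((Ω⁻¹ * Γ * Γᴴ).trace).re := by
  have hdet : IsUnit Ω.det := isUnit_iff_isUnit_det _ |>.mp hΩ.isUnit
  have hOinv : Ω * Ω⁻¹ = 1 := Matrix.mul_nonsing_inv Ω hdet
  have hinvO : Ω⁻¹ * Ω = 1 := Matrix.nonsing_inv_mul Ω hdet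
  set E := X - Ω⁻¹ * Γ with hE
  have hEH : Eᴴ = Xᴴ - Γᴴ * Ω⁻¹ := by
    rw [hE, conjTranspose_sub, conjTranspose_mul, hΩ.isHermitian.inv]
  have h1 : Xᴴ * Ω * (Ω⁻¹ * Γ) = Xᴴ * Γ := by
    rw [Matrix.mul_assoc Xᴴ Ω, ← Matrix.mul_assoc Ω, hOinv, Matrix.one_mul]
  have h2 : Γᴴ * Ω⁻¹ * Ω = Γᴴ := by rw [Matrix.mul_assoc, hinvO, Matrix.mul_one]
  have expand : Eᴴ * Ω * E = Xᴴ * Ω * X - Xᴴ * Γ - Γᴴ * X + Γᴴ * Ω⁻¹ * Γ := by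
    rw [hEH]
    rw [Matrix.sub_mul, h2, Matrix.sub_mul, Matrix.mul_sub, Matrix.mul_sub, h1,
      ← Matrix.mul_assoc Γᴴ Ω⁻¹ Γ]
    abel
  have hpos : 0 ≤ ((Eᴴ * Ω * E).trace).re :=
    psd_trace_re_nonneg (hΩ.posSemidef.conjTranspose_mul_mul_same E)
  have hsym : ((Γᴴ * X).trace).re = ((Xᴴ * Γ).trace).re := by
    have : Γᴴ * X = (Xᴴ * Γ)ᴴ := by rw [conjTranspose_mul, conjTranspose_conjTranspose]
    rw [this, Matrix.trace_conjTranspose]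
    simp
  have hcyc : (Γᴴ * Ω⁻¹ * Γ).trace = (Ω⁻¹ * Γ * Γᴴ).trace := by
    rw [Matrix.trace_mul_cycle, Matrix.trace_mul_cycle]
  have := congrArg (fun z => z.re) (congrArg Matrix.trace expand)
  simp only [Matrix.trace_add, Matrix.trace_sub, Complex.add_re, Complex.sub_re] at this
  rw [hcyc] at this
  linarith [hpos, this, hsym]

theorem stmt_7 (m n : ℕ) :
    ConvexOn ℝ
      {p : Matrix (Fin m) (Fin n) ℂ × Matrix (Fin m) (Fin m) ℂ | p.2.PosDef}
      (fun p => (Matrix.trace (p.2⁻¹ * p.1 * p.1ᴴ)).re) := by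
  constructor
  · -- convexity of the set
    intro p hp q hq a b ha hb hab
    simp only [Set.mem_setOf_eq] at hp hq ⊢
    rcases ha.eq_or_lt with rfl | ha'
    · obtain rfl : b = 1 := by linarith
      simpa using hq
    rcases hb.eq_or_lt with rfl | hb'
    · obtain rfl : a = 1 := by linarith
      simpa using hp
    show ((a • p + b • q).2).PosDef
    simp only [Prod.snd_add, Prod.smul_snd]
    exact (posDef_real_smul hp ha').add (posDef_real_smul hq hb')
  · intro p hp q hq a b ha hb hab
    simp only [Set.mem_setOf_eq] at hp hq
    rcases ha.eq_or_lt with rfl | ha'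
    · obtain rfl : b = 1 := by linarith
      simp
    rcases hb.eq_or_lt with rfl | hb'
    · obtain rfl : a = 1 := by linarith
      simp
    simp only [smul_eq_mul, Prod.fst_add, Prod.snd_add, Prod.smul_fst, Prod.smul_snd]
    set Γ : Matrix (Fin m) (Fin n) ℂ := a • p.1 + b • q.1 with hΓ
    set Ω : Matrix (Fin m) (Fin m) ℂ := a • p.2 + b • q.2 with hΩdef
    have hΩ : Ω.PosDef := (posDef_real_smul hp ha').add (posDef_real_smul hq hb')
    set X : Matrix (Fin m) (Fin n) ℂ := Ω⁻¹ * Γ with hX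
    have hdet : IsUnit Ω.det := isUnit_iff_isUnit_det _ |>.mp hΩ.isUnit
    have hOinv : Ω * Ω⁻¹ = 1 := Matrix.mul_nonsing_inv Ω hdet
    have hXH : Xᴴ = Γᴴ * Ω⁻¹ := by
      rw [hX, conjTranspose_mul, hΩ.isHermitian.inv]
    -- equality at the combination point
    have heq : ((Ω⁻¹ * Γ * Γᴴ).trace).re
        = 2 * ((Xᴴ * Γ).trace).re - ((Xᴴ * Ω * X).trace).re := by
      have e1 : Xᴴ * Γ = Γᴴ * Ω⁻¹ * Γ := by rw [hXH]
      have e2 : Xᴴ * Ω * X = Γᴴ * Ω⁻¹ * Γ := by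
        rw [hXH, hX, Matrix.mul_assoc (Γᴴ * Ω⁻¹) Ω _, ← Matrix.mul_assoc Ω Ω⁻¹ Γ,
          hOinv, Matrix.one_mul]
      have e3 : (Γᴴ * Ω⁻¹ * Γ).trace = (Ω⁻¹ * Γ * Γᴴ).trace := by
        rw [Matrix.trace_mul_cycle, Matrix.trace_mul_cycle]
      rw [e1, e2, e3]; ring
    -- linearity of the tangent functional
    have hlin1 : ((Xᴴ * Γ).trace).re
        = a * ((Xᴴ * p.1).trace).re + b * ((Xᴴ * q.1).trace).re := by
      rw [hΓ, Matrix.mul_add, Matrix.mul_smul, Matrix.mul_smul, Matrix.trace_add,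
        Matrix.trace_smul, Matrix.trace_smul, Complex.add_re, Complex.smul_re,
        Complex.smul_re]
      simp [smul_eq_mul]
    have hlin2 : ((Xᴴ * Ω * X).trace).re
        = a * ((Xᴴ * p.2 * X).trace).re + b * ((Xᴴ * q.2 * X).trace).re := by
      rw [hΩdef, Matrix.mul_add, Matrix.mul_smul, Matrix.mul_smul, Matrix.add_mul,
        Matrix.smul_mul, Matrix.smul_mul, Matrix.trace_add, Matrix.trace_smul,
        Matrix.trace_smul, Complex.add_re, Complex.smul_re, Complex.smul_re]
      simp [smul_eq_mul]
    have t1 := tangent hp p.1 X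
    have t2 := tangent hq q.1 X
    rw [heq, hlin1, hlin2]
    nlinarith [t1, t2, ha'.le, hb'.le]
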